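/- For any matrices W ∈ R^{m×k}, H ∈ R^{n×k} with X = W H^T, one has ‖X‖_* ≤ ‖U^T W‖_F ‖V^T H‖_F ≤ (1/2)(‖W‖_F² + ‖H‖_F²), where U, V are the matrices of left/right singular vectors of X corresponding to its positive singular values. -/

import Mathlib

open Matrix

theorem Matrix.isHermitian_transpose_mul_self {m n α : Type*} [Fintype m] [CommSemiring α]
    [StarRing α] [TrivialStar α] (A : Matrix m n α) : (Aᵀ * A).IsHermitian := by
  rw [IsHermitian, conjTranspose_eq_transpose_of_trivial, transpose_mul, transpose_transpose]

noncomputable def frobNorm {m n : ℕ} (X : Matrix (Fin m) (Fin n) ℝ) : ℝ :=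
  Real.sqrt (∑ i, ∑ j, (X i j) ^ 2)

noncomputable def nuclearNorm {m n : ℕ} (X : Matrix (Fin m) (Fin n) ℝ) : ℝ :=
  ∑ i, Real.sqrt ((Matrix.isHermitian_transpose_mul_self X).eigenvalues i)

lemma sum_sq_eq_trace_aux {p q : ℕ} (A : Matrix (Fin p) (Fin q) ℝ) :
    ∑ i, ∑ j, (A i j)^2 = (Aᵀ * A).trace := by
  simp only [Matrix.trace, Matrix.diag, Matrix.mul_apply, Matrix.transpose_apply, sq]
  exact Finset.sum_comm

lemma frobNorm_sq_eq_trace_aux {p q : ℕ} (A : Matrix (Fin p) (Fin q) ℝ) :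
    frobNorm A ^ 2 = (Aᵀ * A).trace := by
  rw [frobNorm, Real.sq_sqrt (by positivity), sum_sq_eq_trace_aux]

lemma frobNorm_nonneg_aux {p q : ℕ} (A : Matrix (Fin p) (Fin q) ℝ) : 0 ≤ frobNorm A :=
  Real.sqrt_nonneg _

open scoped MatrixOrder in
lemma trace_sqrt_aux {p : ℕ} {A : Matrix (Fin p) (Fin p) ℝ} (hA : A.PosSemidef) :
    (CFC.sqrt A).trace = ∑ i, Real.sqrt (hA.1.eigenvalues i) := by
  rw [CFC.sqrt_eq_cfc, cfc_nnreal_eq_real _ A, hA.1.cfc_eq]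
  simp only [IsHermitian.cfc, Unitary.conjStarAlgAut_apply]
  rw [Matrix.trace_mul_cycle]
  rw [Unitary.coe_star_mul_self, one_mul, Matrix.trace_diagonal]
  simp [hA.eigenvalues_nonneg]

open scoped MatrixOrder in
lemma nuclear_eq_aux {m n r : ℕ} (X : Matrix (Fin m) (Fin n) ℝ)
    (U : Matrix (Fin m) (Fin r) ℝ) (V : Matrix (Fin n) (Fin r) ℝ) (σ : Fin r → ℝ)
    (hU : Uᵀ * U = 1) (hV : Vᵀ * V = 1) (hσ : ∀ i, 0 ≤ σ i)
    (hSVD : X = U * Matrix.diagonal σ * Vᵀ) :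
    nuclearNorm X = ∑ i, σ i := by
  have hA : (Xᴴ * X).PosSemidef := Matrix.posSemidef_conjTranspose_mul_self X
  set B : Matrix (Fin n) (Fin n) ℝ := V * Matrix.diagonal σ * Vᵀ with hB
  have hBpsd : B.PosSemidef := by
    have h : B = (Matrix.diagonal (fun i => Real.sqrt (σ i)) * Vᵀ)ᴴ *
        (Matrix.diagonal (fun i => Real.sqrt (σ i)) * Vᵀ) := by
      simp only [Matrix.conjTranspose_eq_transpose_of_trivial, Matrix.transpose_mul,
        Matrix.transpose_transpose, Matrix.diagonal_transpose, hB, Matrix.mul_assoc]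
      rw [← Matrix.mul_assoc (Matrix.diagonal _) (Matrix.diagonal _),
        Matrix.diagonal_mul_diagonal]
      rw [show (fun i => Real.sqrt (σ i) * Real.sqrt (σ i)) = σ from
        funext fun i => Real.mul_self_sqrt (hσ i)]
    rw [h]; exact Matrix.posSemidef_conjTranspose_mul_self _
  have hsq : B ^ 2 = Xᴴ * X := by
    rw [Matrix.conjTranspose_eq_transpose_of_trivial, hSVD, pow_two, hB]
    simp only [Matrix.transpose_mul, Matrix.transpose_transpose, Matrix.diagonal_transpose,
      Matrix.mul_assoc]
    rw [← Matrix.mul_assoc Vᵀ V, hV, Matrix.one_mul, ← Matrix.mul_assoc Uᵀ U, hU,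
      Matrix.one_mul]
  have hBsqrt : B = CFC.sqrt (Xᴴ * X) := by
    rw [eq_comm, CFC.sqrt_eq_iff _ _ hA.nonneg hBpsd.nonneg, ← sq, hsq]
  have h1 : nuclearNorm X = (CFC.sqrt (Xᴴ * X)).trace := (trace_sqrt_aux hA).symm
  rw [h1, ← hBsqrt, hB, Matrix.trace_mul_cycle, hV, Matrix.one_mul, Matrix.trace_diagonal]

lemma trace_mul_transpose_le_aux {p q : ℕ} (A B : Matrix (Fin p) (Fin q) ℝ) :
    (A * Bᵀ).trace ≤ frobNorm A * frobNorm B := by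
  have h1 : (A * Bᵀ).trace = ∑ i, ∑ j, A i j * B i j := by
    simp [Matrix.trace, Matrix.diag, Matrix.mul_apply]
  rw [h1, frobNorm, frobNorm]
  have h := Real.sum_mul_le_sqrt_mul_sqrt (Finset.univ : Finset (Fin p × Fin q))
    (fun x => A x.1 x.2) (fun x => B x.1 x.2)
  rw [← Finset.univ_product_univ, Finset.sum_product, Finset.sum_product,
    Finset.sum_product] at h
  exact h

lemma frob_proj_aux {a b c : ℕ} (U : Matrix (Fin a) (Fin b) ℝ) (hU : Uᵀ * U = 1)
    (W : Matrix (Fin a) (Fin c) ℝ) : frobNorm (Uᵀ * W) ^ 2 ≤ frobNorm W ^ 2 := by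
  rw [frobNorm_sq_eq_trace_aux, frobNorm_sq_eq_trace_aux]
  set P : Matrix (Fin a) (Fin a) ℝ := 1 - U * Uᵀ with hPdef
  have h2 : U * Uᵀ * (U * Uᵀ) = U * Uᵀ := by
    rw [Matrix.mul_assoc, ← Matrix.mul_assoc Uᵀ U, hU, Matrix.one_mul]
  have hPP : P * P = P := by
    rw [hPdef, sub_mul, mul_sub, mul_sub, one_mul, mul_one, h2]
    simp only [Matrix.one_mul, one_mul]
    abel
  have hPt : Pᵀ = P := by
    rw [hPdef, Matrix.transpose_sub, Matrix.transpose_one, Matrix.transpose_mul,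
      Matrix.transpose_transpose]
  have key : Wᵀ * W - (Uᵀ * W)ᵀ * (Uᵀ * W) = (P * W)ᵀ * (P * W) := by
    rw [Matrix.transpose_mul, Matrix.transpose_mul, Matrix.transpose_transpose, hPt]
    rw [show Wᵀ * P * (P * W) = Wᵀ * (P * P) * W by simp only [Matrix.mul_assoc], hPP,
      hPdef, Matrix.mul_sub, Matrix.mul_one, Matrix.sub_mul]
    simp only [Matrix.mul_assoc]
  have hpos : 0 ≤ ((P * W)ᵀ * (P * W)).trace := by
    rw [← sum_sq_eq_trace_aux]; positivity
  have := congrArg Matrix.trace key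
  rw [Matrix.trace_sub] at this
  linarith

/-- For any factorization `X = W Hᵀ`,
`‖X‖_* ≤ ‖Uᵀ W‖_F ‖Vᵀ H‖_F ≤ (1/2)(‖W‖_F² + ‖H‖_F²)`,
where `U, V` are the singular vector matrices of `X` for its positive singular values. -/
theorem nuclearNorm_le_factorization {m n r k : ℕ}
    (X : Matrix (Fin m) (Fin n) ℝ)
    (U : Matrix (Fin m) (Fin r) ℝ) (V : Matrix (Fin n) (Fin r) ℝ) (σ : Fin r → ℝ)
    (hU : Uᵀ * U = 1) (hV : Vᵀ * V = 1) (hσ : ∀ i, 0 < σ i)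
    (hSVD : X = U * Matrix.diagonal σ * Vᵀ)
    (hrank : X.rank = r)
    (W : Matrix (Fin m) (Fin k) ℝ) (H : Matrix (Fin n) (Fin k) ℝ)
    (hWH : W * Hᵀ = X) :
    nuclearNorm X ≤ frobNorm (Uᵀ * W) * frobNorm (Vᵀ * H) ∧
      frobNorm (Uᵀ * W) * frobNorm (Vᵀ * H) ≤ (1 / 2) * (frobNorm W ^ 2 + frobNorm H ^ 2) := by
  have hnuc : nuclearNorm X = ∑ i, σ i :=
    nuclear_eq_aux X U V σ hU hV (fun i => (hσ i).le) hSVD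
  have hdiag : Matrix.diagonal σ = (Uᵀ * W) * (Vᵀ * H)ᵀ := by
    have h1 : (Uᵀ * W) * (Vᵀ * H)ᵀ = Uᵀ * (W * Hᵀ) * V := by
      rw [Matrix.transpose_mul, Matrix.transpose_transpose]
      simp only [Matrix.mul_assoc]
    rw [h1, hWH, hSVD]
    simp only [Matrix.mul_assoc]
    rw [hV, Matrix.mul_one, ← Matrix.mul_assoc Uᵀ U, hU, Matrix.one_mul]
  constructor
  · calc nuclearNorm X = (Matrix.diagonal σ).trace := by rw [hnuc, Matrix.trace_diagonal]
      _ = ((Uᵀ * W) * (Vᵀ * H)ᵀ).trace := by rw [← hdiag]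
      _ ≤ frobNorm (Uᵀ * W) * frobNorm (Vᵀ * H) := trace_mul_transpose_le_aux _ _
  · have ha := frob_proj_aux U hU W
    have hb := frob_proj_aux V hV H
    have h1 := frobNorm_nonneg_aux (Uᵀ * W)
    have h2 := frobNorm_nonneg_aux (Vᵀ * H)
    nlinarith [sq_nonneg (frobNorm (Uᵀ * W) - frobNorm (Vᵀ * H))]
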